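/- Let F be an algebraically closed field of characteristic zero, μ ∈ F, λ a positive integer. If the equation x·a' + (x + μ − λ)·a + λ·x^λ = 0 has a solution a ∈ F(x), then μ is a natural number. -/

import Mathlib

open Polynomial

private lemma deriv_algebraMap' {F : Type*} [Field F]
    (d : Derivation F (RatFunc F) (RatFunc F)) (hd : d RatFunc.X = 1)
    (p : Polynomial F) :
    d (algebraMap (Polynomial F) (RatFunc F) p) =
      algebraMap (Polynomial F) (RatFunc F) (derivative p) := by
  have h : d.compAlgebraMap (Polynomial F) = Polynomial.mkDerivation F (1 : RatFunc F) := by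
    apply Polynomial.derivation_ext
    simp [Derivation.compAlgebraMap_apply, RatFunc.algebraMap_X, hd, Polynomial.mkDerivation_X]
  have h2 := DFunLike.congr_fun h p
  simpa [Derivation.compAlgebraMap_apply, Polynomial.mkDerivation_apply,
    Algebra.smul_def, mul_one] using h2

private lemma root_denom_zero' (F : Type*) [Field F] [CharZero F]
    (μ : F) (l : ℕ) (p q : Polynomial F) (hp : p ≠ 0) (hq : q ≠ 0)
    (hcop : IsCoprime p q)
    (E : X * derivative p * q - X * p * derivative q
      + (X + C μ - (l : Polynomial F)) * p * q + (l : Polynomial F) * X ^ l * q ^ 2 = 0)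
    (r : F) (hr : q.IsRoot r) : r = 0 := by
  by_contra hr0
  set k := q.rootMultiplicity r with hk
  have hkpos : 0 < k := (rootMultiplicity_pos hq).mpr hr
  have hq' : derivative q ≠ 0 := by
    intro h
    have h0 : q.natDegree = 0 := natDegree_eq_zero_of_derivative_eq_zero h
    obtain ⟨c, rfl⟩ := natDegree_eq_zero.mp h0
    simp only [IsRoot, eval_C] at hr
    exact hq (by rw [hr, map_zero])
  have hpr : ¬ p.IsRoot r := by
    obtain ⟨u, v, huv⟩ := hcop
    intro hpr
    have := congrArg (eval r) huv
    simp [hr.eq_zero, hpr.eq_zero] at this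
  have hdq : (X - C r) ^ k ∣ q := pow_rootMultiplicity_dvd q r
  have hdvd : (X - C r) ^ k ∣ X * p * derivative q := by
    have h1 : X * p * derivative q = X * derivative p * q
        + (X + C μ - (l : Polynomial F)) * p * q + (l : Polynomial F) * X ^ l * q ^ 2 := by
      linear_combination -E
    rw [h1]
    exact dvd_add (dvd_add (hdq.mul_left _) (hdq.mul_left _))
      ((hdq.trans (dvd_pow_self q two_ne_zero)).mul_left _)
  have hne : X * p * derivative q ≠ 0 := mul_ne_zero (mul_ne_zero X_ne_zero hp) hq'
  have hle : k ≤ rootMultiplicity r (X * p * derivative q) :=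
    (le_rootMultiplicity_iff hne).mpr hdvd
  rw [rootMultiplicity_mul (by exact hne), rootMultiplicity_mul (mul_ne_zero X_ne_zero hp)] at hle
  rw [derivative_rootMultiplicity_of_root hr] at hle
  rw [rootMultiplicity_eq_zero hpr] at hle
  have hXr : ¬ (X : Polynomial F).IsRoot r := by simpa [IsRoot] using hr0
  rw [rootMultiplicity_eq_zero hXr] at hle
  omega

private lemma monic_roots_zero_eq_X_pow' (F : Type*) [Field F] [IsAlgClosed F] (q : Polynomial F)
    (hq : q.Monic) (hroots : ∀ r, q.IsRoot r → r = 0) : q = X ^ q.natDegree := by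
  have hsp : Splits q := IsAlgClosed.splits q
  have hprod := hsp.eq_prod_roots_of_monic hq
  have hcard : q.roots.card = q.natDegree := splits_iff_card_roots.mp hsp
  have hrep : q.roots.map (fun a => X - C a) = Multiset.replicate q.natDegree X := by
    rw [Multiset.eq_replicate]
    refine ⟨by simp [hcard], ?_⟩
    intro b hb
    obtain ⟨r, hr, rfl⟩ := Multiset.mem_map.mp hb
    have := hroots r (isRoot_of_mem_roots hr)
    simp [this]
  conv_lhs => rw [hprod, hrep, Multiset.prod_replicate]

private lemma reduceE' (F : Type*) [Field F] (μ : F) (l m : ℕ) (p : Polynomial F)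
    (E : X * derivative p * X ^ m - X * p * derivative (X ^ m : Polynomial F)
      + (X + C μ - (l : Polynomial F)) * p * X ^ m
      + (l : Polynomial F) * X ^ l * (X ^ m : Polynomial F) ^ 2 = 0) :
    X * derivative p + (X + C μ - (l : Polynomial F) - (m : Polynomial F)) * p
      + (l : Polynomial F) * X ^ (l + m) = 0 := by
  have hxm : X * derivative (X ^ m : Polynomial F) = (m : Polynomial F) * X ^ m := by
    cases m with
    | zero => simp
    | succ k =>
      rw [derivative_X_pow, C_eq_natCast]
      simp only [Nat.add_sub_cancel]
      ring
  have hmain : (X * derivative p + (X + C μ - (l : Polynomial F) - (m : Polynomial F)) * p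
      + (l : Polynomial F) * X ^ (l + m)) * X ^ m = 0 := by
    linear_combination E + p * hxm
  rcases mul_eq_zero.mp hmain with h | h
  · exact h
  · exact absurd h (pow_ne_zero _ X_ne_zero)

private lemma coeff_stage' (F : Type*) [Field F] [CharZero F] (μ : F) (l m : ℕ) (hl : 0 < l)
    (p : Polynomial F) (hp : p ≠ 0)
    (E : X * derivative p + (X + C μ - (l : Polynomial F) - (m : Polynomial F)) * p
      + (l : Polynomial F) * X ^ (l + m) = 0) :
    ∃ n : ℕ, (n : F) = μ := by
  set c : F := (l : F) + (m : F) with hc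
  have hXd : ∀ k : ℕ, (X * derivative p).coeff k = (k : F) * p.coeff k := by
    intro k
    cases k with
    | zero => simp [mul_coeff_zero]
    | succ k => rw [coeff_X_mul, coeff_derivative]; push_cast; ring
  have hsplit : (X + C μ - (l : Polynomial F) - (m : Polynomial F)) * p
      = X * p + C (μ - c) * p := by
    rw [hc, C_sub, C_add, C_eq_natCast, C_eq_natCast]; ring
  have hcoeff : ∀ k : ℕ, ((k : F) + μ - c) * p.coeff k + (X * p).coeff k
      + (if k = l + m then (l : F) else 0) = 0 := by
    intro k
    have h := congrArg (fun f => coeff f k) E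
    simp only [coeff_add, coeff_zero, hsplit] at h
    rw [hXd k, coeff_C_mul, ← C_eq_natCast, coeff_C_mul, coeff_X_pow] at h
    rw [mul_ite, mul_one, mul_zero] at h
    linear_combination h
  have hpn : p.coeff p.natDegree ≠ 0 := by
    rw [coeff_natDegree]; exact leadingCoeff_ne_zero.mpr hp
  set n := p.natDegree with hn
  have hlF : (l : F) ≠ 0 := Nat.cast_ne_zero.mpr hl.ne'
  have hlm : l + m = n + 1 := by
    have h1 := hcoeff (n + 1)
    rw [coeff_eq_zero_of_natDegree_lt (lt_add_one n), coeff_X_mul, mul_zero, zero_add] at h1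
    by_contra hne
    rw [if_neg (fun h => hne h.symm), add_zero] at h1
    exact hpn h1
  by_cases hex : ∃ k, k ≤ n ∧ (k : F) + μ - c = 0
  · obtain ⟨k, hk, hkeq⟩ := hex
    refine ⟨l + m - k, ?_⟩
    have hkle : k ≤ l + m := by omega
    rw [Nat.cast_sub hkle]
    push_cast
    rw [hc] at hkeq
    linear_combination -hkeq
  · push_neg at hex
    exfalso
    have claim : ∀ k, k ≤ n → p.coeff k = 0 := by
      intro k
      induction k with
      | zero =>
        intro _
        have h0 := hcoeff 0
        rw [mul_coeff_zero, coeff_X, if_neg (by norm_num), zero_mul,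
          if_neg (by omega), add_zero, add_zero] at h0
        exact (mul_eq_zero.mp h0).resolve_left (hex 0 (Nat.zero_le n))
      | succ k ih =>
        intro hk
        have hk' : k ≤ n := Nat.le_of_succ_le hk
        have h0 := hcoeff (k + 1)
        rw [coeff_X_mul, ih hk', if_neg (by omega), add_zero, add_zero] at h0
        exact (mul_eq_zero.mp h0).resolve_left (hex (k + 1) hk)
    exact hpn (claim n le_rfl)

/-- Over an algebraically closed field `F` of characteristic zero, if
`x a' + (x + μ - λ) a + λ x^λ = 0` has a rational solution (with `λ` a positive
integer), then `μ` is a natural number. -/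
theorem rational_solution_forces_mu_nat
    (F : Type*) [Field F] [CharZero F] [IsAlgClosed F]
    (d : Derivation F (RatFunc F) (RatFunc F)) (hd : d RatFunc.X = 1)
    (μ : F) (l : ℕ) (hl : 0 < l)
    (hsol : ∃ a : RatFunc F,
      RatFunc.X * d a + (RatFunc.X + RatFunc.C μ - (l : RatFunc F)) * a
        + (l : RatFunc F) * RatFunc.X ^ l = 0) :
    ∃ n : ℕ, (n : F) = μ := by
  obtain ⟨a, hsol⟩ := hsol
  set A := algebraMap (Polynomial F) (RatFunc F) with hA
  have hlX : A (l : Polynomial F) ≠ 0 :=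
    RatFunc.algebraMap_ne_zero (Nat.cast_ne_zero.mpr hl.ne')
  have ha0 : a ≠ 0 := by
    intro h
    rw [h] at hsol
    simp only [map_zero, mul_zero, add_zero, zero_add, mul_zero, zero_mul] at hsol
    have hX : (RatFunc.X : RatFunc F) ^ l ≠ 0 := pow_ne_zero _ RatFunc.X_ne_zero
    have hlr : ((l : ℕ) : RatFunc F) ≠ 0 := by
      rw [← map_natCast A]
      exact hlX
    rcases mul_eq_zero.mp hsol with h | h
    · exact hlr h
    · exact hX h
  set p := RatFunc.num a with hp
  set q := RatFunc.denom a with hq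
  have hpne : p ≠ 0 := RatFunc.num_ne_zero ha0
  have hqne : q ≠ 0 := RatFunc.denom_ne_zero a
  have hq0 : A q ≠ 0 := RatFunc.algebraMap_ne_zero hqne
  have hnum : a * A q = A p := by
    rw [← RatFunc.num_div_denom a]
    rw [div_mul_cancel₀]
    exact hq0
  have hda : A q * d a = A (derivative p) - a * A (derivative q) := by
    have h3 := congrArg d hnum
    rw [deriv_algebraMap' d hd] at h3
    rw [d.leibniz] at h3
    simp only [smul_eq_mul] at h3
    rw [deriv_algebraMap' d hd] at h3
    linear_combination h3
  have E : X * derivative p * q - X * p * derivative q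
      + (X + C μ - (l : Polynomial F)) * p * q + (l : Polynomial F) * X ^ l * q ^ 2 = 0 := by
    apply RatFunc.algebraMap_injective F
    rw [map_zero]
    simp only [map_add, map_sub, map_mul, map_pow, map_natCast, RatFunc.algebraMap_X,
      RatFunc.algebraMap_C]
    linear_combination (A q)^2 * hsol - (RatFunc.X * A q) * hda
      - ((RatFunc.X + RatFunc.C μ - (l : RatFunc F)) * A q - RatFunc.X * A (derivative q)) * hnum
  have hqX : q = X ^ q.natDegree :=
    monic_roots_zero_eq_X_pow' F q (RatFunc.monic_denom a)
      (root_denom_zero' F μ l p q hpne hqne (RatFunc.isCoprime_num_denom a) E)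
  rw [hqX] at E
  exact coeff_stage' F μ l q.natDegree hl p hpne (reduceE' F μ l q.natDegree p E)
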